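/- arXiv:2601.17628 — 2 statements merged into one kernel-verified Lean document; each statement's English description precedes it below -/
import Mathlib

section
/- For ℓ ∈ ℕ and 0 ≤ m ≤ ℓ define the associated Legendre function P_ℓ^m : (-1,1) → ℝ by P_ℓ^m(u) = (1 - u²)^{m/2} d^m/du^m P_ℓ(u), where P_ℓ(x) = (1/(2^ℓ ℓ!)) dℓ/dxℓ [ (x² - 1)^ℓ ] is the Legendre polynomial given by Rodrigues' formula. Then the function Θ(θ) = P_ℓ^m(cos θ) satisfies the polar equation on (0,π): for all θ ∈ (0,π), (1/ sin θ) d/dθ ( sin θ Θ'(θ) ) - (m² / sin²θ) Θ(θ) + ℓ(ℓ+1) Θ(θ) = 0. -/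
open Real

open Polynomial in
private lemma iteratedDeriv_polyEval' (p : Polynomial ℝ) (n : ℕ) :
    iteratedDeriv n (fun x => eval x p) = fun x => eval x (derivative^[n] p) := by
  induction n generalizing p with
  | zero => simp
  | succ n ih =>
    rw [iteratedDeriv_succ', Function.iterate_succ_apply]
    rw [show (deriv fun x => eval x p) = fun x => eval x (derivative p) from
      funext fun x => Polynomial.deriv p]
    exact ih _

open Polynomial in
private lemma iterate_derivative_C_mul' (c : ℝ) (p : Polynomial ℝ) (n : ℕ) :
    derivative^[n] (C c * p) = C c * derivative^[n] p := by
  induction n generalizing p with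
  | zero => rfl
  | succ n ih =>
    rw [Function.iterate_succ_apply, Function.iterate_succ_apply, derivative_C_mul, ih]

open Polynomial in
private lemma legE' (ℓ : ℕ) : (X^2 - 1) * derivative ((X^2-1)^ℓ : Polynomial ℝ)
    = 2*(ℓ:Polynomial ℝ) * X * (X^2-1)^ℓ := by
  cases ℓ with
  | zero => simp
  | succ k =>
    rw [derivative_pow]
    simp only [Nat.add_sub_cancel, derivative_sub, derivative_one, derivative_X_pow,
      map_ofNat, C_eq_natCast, C_add, C_1]
    push_cast [C_eq_natCast, C_add, C_1]
    ring

open Polynomial in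
private lemma legG' (ℓ : ℕ) (n : ℕ) :
    (X^2 - 1) * derivative^[n+2] ((X^2-1)^ℓ : Polynomial ℝ)
      = (2*(ℓ:Polynomial ℝ) - 2*(n:Polynomial ℝ) - 2) * X * derivative^[n+1] ((X^2-1)^ℓ)
        + ((n:Polynomial ℝ)+1) * (2*(ℓ:Polynomial ℝ) - (n:Polynomial ℝ)) * derivative^[n] ((X^2-1)^ℓ) := by
  induction n with
  | zero =>
    have h := congrArg derivative (legE' ℓ)
    simp only [derivative_mul, derivative_sub, derivative_one, derivative_X_pow, derivative_X,
      derivative_natCast, derivative_ofNat, map_ofNat, C_eq_natCast, C_add, C_1,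
      Function.iterate_succ_apply', Function.iterate_zero_apply] at h ⊢
    push_cast at h ⊢
    linear_combination h
  | succ n ih =>
    have h := congrArg derivative ih
    simp only [derivative_mul, derivative_sub, derivative_add, derivative_one, derivative_X_pow,
      derivative_X, derivative_natCast, derivative_ofNat, map_ofNat, C_eq_natCast, C_add, C_1,
      Function.iterate_succ_apply', Function.iterate_zero_apply] at h ⊢
    push_cast at h ⊢
    linear_combination h

/-- The Legendre polynomial of degree `ℓ`, given by Rodrigues' formula
`P_ℓ(x) = (1/(2^ℓ ℓ!)) dℓ/dxℓ [(x² - 1)^ℓ]`. -/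
noncomputable def legendreP (ℓ : ℕ) (x : ℝ) : ℝ :=
  (1 / (2 ^ ℓ * (Nat.factorial ℓ : ℝ))) *
    iteratedDeriv ℓ (fun t : ℝ => (t ^ 2 - 1) ^ ℓ) x

/-- The associated Legendre function `P_ℓ^m(u) = (1-u²)^{m/2} (d^m/du^m) P_ℓ(u)`
(without the Condon–Shortley sign). -/
noncomputable def assocLegendreP (ℓ m : ℕ) (u : ℝ) : ℝ :=
  (1 - u ^ 2) ^ ((m : ℝ) / 2) * iteratedDeriv m (legendreP ℓ) u

open Polynomial in
/-- `Θ(θ) = P_ℓ^m(cos θ)` satisfies the polar (associated Legendre) equation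
`(1/sinθ)(sinθ Θ')' - (m²/sin²θ)Θ + ℓ(ℓ+1)Θ = 0` on `(0,π)`. -/
theorem assocLegendre_polar_ode (ℓ m : ℕ) (hm : m ≤ ℓ) :
    ∀ θ ∈ Set.Ioo (0 : ℝ) π,
      (1 / Real.sin θ) *
        deriv (fun t => Real.sin t *
          deriv (fun t' => assocLegendreP ℓ m (Real.cos t')) t) θ
      - ((m : ℝ) ^ 2 / Real.sin θ ^ 2) * assocLegendreP ℓ m (Real.cos θ)
      + (ℓ : ℝ) * ((ℓ : ℝ) + 1) * assocLegendreP ℓ m (Real.cos θ) = 0 := by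
  intro θ hθ
  obtain ⟨hθ0, hθπ⟩ := hθ
  have hs : 0 < Real.sin θ := Real.sin_pos_of_pos_of_lt_pi hθ0 hθπ
  set cc : ℝ := 1 / (2 ^ ℓ * (Nat.factorial ℓ : ℝ)) with hcc
  set q : Polynomial ℝ := derivative^[ℓ + m] ((X^2-1)^ℓ) with hq
  -- the m-th iterated derivative of legendreP is (a constant times) a polynomial
  have hIterm : iteratedDeriv m (legendreP ℓ) = fun u => cc * eval u q := by
    have hLeg : legendreP ℓ = fun x =>
        eval x (C cc * derivative^[ℓ] ((X^2-1)^ℓ)) := by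
      funext x
      have h0 : (fun t : ℝ => (t ^ 2 - 1) ^ ℓ)
          = fun t => eval t ((X^2 - 1 : Polynomial ℝ)^ℓ) := by
        funext t; simp
      rw [legendreP, h0, iteratedDeriv_polyEval']
      simp [hcc]
    rw [hLeg, iteratedDeriv_polyEval']
    funext u
    rw [iterate_derivative_C_mul', ← Function.iterate_add_apply, Nat.add_comm m ℓ, ← hq]
    simp
  -- rewrite assocLegendreP ∘ cos on (0, π)
  have hA : ∀ t ∈ Set.Ioo (0:ℝ) π,
      assocLegendreP ℓ m (Real.cos t) = Real.sin t ^ m * (cc * eval (Real.cos t) q) := by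
    intro t ht
    have hst : 0 < Real.sin t := Real.sin_pos_of_pos_of_lt_pi ht.1 ht.2
    rw [assocLegendreP, hIterm]
    congr 1
    rw [← Real.sin_sq, ← Real.rpow_natCast (Real.sin t) 2, ← Real.rpow_mul hst.le]
    rw [show ((2:ℕ):ℝ) * ((m:ℝ)/2) = ((m:ℕ):ℝ) by push_cast; ring, Real.rpow_natCast]
  -- the smooth model function and its derivative
  set f : ℝ → ℝ := fun t => Real.sin t ^ m * (cc * eval (Real.cos t) q) with hfdef
  have hf : ∀ t : ℝ, HasDerivAt f
      (((m:ℝ) * Real.sin t ^ (m-1) * Real.cos t) * (cc * eval (Real.cos t) q)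
        + Real.sin t ^ m * (cc * (eval (Real.cos t) (derivative q) * -Real.sin t))) t := by
    intro t
    have h1 : HasDerivAt (fun t => Real.sin t ^ m)
        ((m:ℝ) * Real.sin t ^ (m-1) * Real.cos t) t := (Real.hasDerivAt_sin t).pow m
    have h2 : HasDerivAt (fun t => eval (Real.cos t) q)
        (eval (Real.cos t) (derivative q) * -Real.sin t) t :=
      (q.hasDerivAt (Real.cos t)).comp t (Real.hasDerivAt_cos t)
    exact h1.mul (h2.const_mul cc)
  have hd1 : ∀ t ∈ Set.Ioo (0:ℝ) π,
      deriv (fun t' => assocLegendreP ℓ m (Real.cos t')) t = deriv f t := by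
    intro t ht
    have hev : (fun t' => assocLegendreP ℓ m (Real.cos t')) =ᶠ[nhds t] f := by
      filter_upwards [isOpen_Ioo.mem_nhds ht] with x hx
      exact hA x hx
    exact hev.deriv_eq
  have houter : (fun t => Real.sin t * deriv (fun t' => assocLegendreP ℓ m (Real.cos t')) t)
      =ᶠ[nhds θ] fun t => Real.sin t * deriv f t := by
    filter_upwards [isOpen_Ioo.mem_nhds (Set.mem_Ioo.2 ⟨hθ0, hθπ⟩)] with x hx
    rw [hd1 x hx]
  -- the tidy closed form G of sin ⬝ f'
  set G : ℝ → ℝ := fun t => ((m:ℝ) * Real.sin t ^ m) * Real.cos t * (cc * eval (Real.cos t) q)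
      - Real.sin t ^ (m+2) * (cc * eval (Real.cos t) (derivative q)) with hGdef
  have hGfun : (fun t => Real.sin t * deriv f t) = G := by
    funext t
    rw [(hf t).deriv, hGdef]
    cases m with
    | zero => simp; ring
    | succ k => simp only [Nat.succ_sub_one]; ring
  have hGθ : HasDerivAt G
      (((m:ℝ) * ((m:ℝ) * Real.sin θ ^ (m-1) * Real.cos θ) * Real.cos θ
          + ((m:ℝ) * Real.sin θ ^ m) * -Real.sin θ) * (cc * eval (Real.cos θ) q)
        + ((m:ℝ) * Real.sin θ ^ m) * Real.cos θ
            * (cc * (eval (Real.cos θ) (derivative q) * -Real.sin θ))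
        - ((((m:ℕ)+2 : ℕ):ℝ) * Real.sin θ ^ (m+1) * Real.cos θ
              * (cc * eval (Real.cos θ) (derivative q))
            + Real.sin θ ^ (m+2)
              * (cc * (eval (Real.cos θ) (derivative (derivative q)) * -Real.sin θ)))) θ := by
    have h1 : HasDerivAt (fun t => Real.sin t ^ m)
        ((m:ℝ) * Real.sin θ ^ (m-1) * Real.cos θ) θ := (Real.hasDerivAt_sin θ).pow m
    have h2 : HasDerivAt (fun t => Real.sin t ^ (m+2))
        ((((m:ℕ)+2:ℕ):ℝ) * Real.sin θ ^ (m+1) * Real.cos θ) θ := by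
      have h := (Real.hasDerivAt_sin θ).pow (m+2)
      rw [show m+2-1 = m+1 by omega] at h
      exact h
    have hE : HasDerivAt (fun t => cc * eval (Real.cos t) q)
        (cc * (eval (Real.cos θ) (derivative q) * -Real.sin θ)) θ :=
      ((q.hasDerivAt (Real.cos θ)).comp θ (Real.hasDerivAt_cos θ)).const_mul cc
    have hE' : HasDerivAt (fun t => cc * eval (Real.cos t) (derivative q))
        (cc * (eval (Real.cos θ) (derivative (derivative q)) * -Real.sin θ)) θ :=
      (((derivative q).hasDerivAt (Real.cos θ)).comp θ (Real.hasDerivAt_cos θ)).const_mul cc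
    exact (((h1.const_mul (m:ℝ)).mul (Real.hasDerivAt_cos θ)).mul hE).sub (h2.mul hE')
  rw [hA θ ⟨hθ0, hθπ⟩, houter.deriv_eq, hGfun, hGθ.deriv]
  -- the associated Legendre ODE for the polynomial q, evaluated at cos θ
  have hODE : (Real.cos θ^2 - 1) * eval (Real.cos θ) (derivative (derivative q))
      = (2*(ℓ:ℝ) - 2*((ℓ:ℝ)+(m:ℝ)) - 2) * Real.cos θ * eval (Real.cos θ) (derivative q)
        + (((ℓ:ℝ)+(m:ℝ))+1) * (2*(ℓ:ℝ) - ((ℓ:ℝ)+(m:ℝ))) * eval (Real.cos θ) q := by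
    have h := congrArg (eval (Real.cos θ)) (legG' ℓ (ℓ+m))
    rw [show ℓ+m+2 = (ℓ+m)+1+1 from rfl, Function.iterate_succ_apply',
      Function.iterate_succ_apply', ← hq] at h
    simp only [eval_mul, eval_add, eval_sub, eval_pow, eval_X, eval_one, eval_natCast,
      eval_ofNat] at h
    push_cast at h
    linear_combination h
  have hsc : Real.sin θ ^ 2 = 1 - Real.cos θ ^ 2 := Real.sin_sq θ
  cases m with
  | zero =>
    push_cast at hODE ⊢
    field_simp
    linear_combination (Real.sin θ^2 * (cc * eval (Real.cos θ) (derivative (derivative q)))) * hsc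
      - (cc * Real.sin θ^2) * hODE
  | succ k =>
    simp only [Nat.succ_sub_one]
    push_cast at hODE ⊢
    field_simp
    linear_combination (((k:ℝ)+1)^2 * Real.sin θ^(k+1) * (cc * eval (Real.cos θ) q)
        + Real.sin θ^(k+3) * (cc * eval (Real.cos θ) (derivative (derivative q)))) * hsc
      - cc * Real.sin θ^(k+3) * hODE
end

section
/- For ℓ ∈ ℕ and 0 ≤ m ≤ ℓ let P_ℓ^m(u) = (1 - u²)^{m/2} d^m/du^m P_ℓ(u), where P_ℓ(x) = (1/(2^ℓ ℓ!)) dℓ/dxℓ [ (x² - 1)^ℓ ]. Then for every fixed order m and all degrees ℓ ≠ ℓ' with m ≤ ℓ and m ≤ ℓ', the associated Legendre functions of the same order are orthogonal on [-1,1]: ∫_{-1}^{1} P_ℓ^m(x) P_{ℓ'}^m(x) dx = 0. -/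
open Real

namespace AssocLegendreAux

open Polynomial

/-- The Rodrigues polynomial `(X² - 1)^n`. -/
noncomputable def R (n : ℕ) : Polynomial ℝ := ((X : ℝ[X]) ^ 2 - 1) ^ n

lemma iteratedDeriv_polyEval (p : Polynomial ℝ) (n : ℕ) :
    iteratedDeriv n (fun x => p.eval x) = fun x => (derivative^[n] p).eval x := by
  induction n with
  | zero => simp
  | succ n ih =>
    rw [iteratedDeriv_succ, ih, Function.iterate_succ_apply']
    ext x
    exact (Polynomial.hasDerivAt _ x).deriv

lemma poly_ftc (p : Polynomial ℝ) :
    ∫ x in (-1:ℝ)..1, (derivative p).eval x = p.eval 1 - p.eval (-1) := by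
  apply intervalIntegral.integral_eq_sub_of_hasDerivAt (f := fun x => p.eval x)
  · intro x _; exact p.hasDerivAt x
  · exact (Polynomial.continuous _).intervalIntegrable _ _

lemma poly_ibp (p q : Polynomial ℝ)
    (h1 : p.eval 1 * q.eval 1 = 0) (h2 : p.eval (-1) * q.eval (-1) = 0) :
    ∫ x in (-1:ℝ)..1, (derivative p).eval x * q.eval x
      = - ∫ x in (-1:ℝ)..1, p.eval x * (derivative q).eval x := by
  have h := poly_ftc (p * q)
  rw [derivative_mul] at h
  have he : ∀ x ∈ Set.uIcc (-1:ℝ) 1, ((derivative p * q + p * derivative q).eval x)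
      = (derivative p).eval x * q.eval x + p.eval x * (derivative q).eval x := by
    intro x _; simp
  rw [intervalIntegral.integral_congr he] at h
  rw [intervalIntegral.integral_add (f := fun x => (derivative p).eval x * q.eval x)
      (g := fun x => p.eval x * (derivative q).eval x)
      (((Polynomial.continuous _).mul (Polynomial.continuous _)).intervalIntegrable _ _)
      (((Polynomial.continuous _).mul (Polynomial.continuous _)).intervalIntegrable _ _)] at h
  simp only [eval_mul] at h
  rw [h1, h2] at h
  linarith

lemma poly_ibp_iter (n : ℕ) (p q : Polynomial ℝ)
    (hb : ∀ j < n, (derivative^[n-1-j] p).eval 1 * (derivative^[j] q).eval 1 = 0 ∧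
                   (derivative^[n-1-j] p).eval (-1) * (derivative^[j] q).eval (-1) = 0) :
    ∫ x in (-1:ℝ)..1, (derivative^[n] p).eval x * q.eval x
      = (-1:ℝ)^n * ∫ x in (-1:ℝ)..1, p.eval x * (derivative^[n] q).eval x := by
  induction n generalizing q with
  | zero => simp
  | succ n ih =>
    have h0 := hb 0 (Nat.succ_pos n)
    simp only [Nat.sub_zero, Nat.add_sub_cancel, Function.iterate_zero, id] at h0
    rw [Function.iterate_succ_apply', poly_ibp _ _ h0.1 h0.2]
    rw [ih (derivative q) (fun j hj => by
      have := hb (j+1) (by omega)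
      have e : n + 1 - 1 - (j+1) = n - 1 - j := by omega
      rw [e, Function.iterate_succ_apply] at this
      exact this)]
    rw [← Function.iterate_succ_apply]
    ring

lemma iter_deriv_factor (n : ℕ) (h : Polynomial ℝ) (k : ℕ) (hk : k ≤ n) :
    ∃ s : Polynomial ℝ, derivative^[k] (((X:ℝ[X])^2 - 1)^n * h)
      = ((X:ℝ[X])^2 - 1)^(n-k) * s := by
  induction k with
  | zero => exact ⟨h, by simp⟩
  | succ k ih =>
    obtain ⟨s, hs⟩ := ih (Nat.le_of_succ_le hk)
    rw [Function.iterate_succ_apply', hs]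
    have hnk : n - k = (n - (k+1)) + 1 := by omega
    refine ⟨C ((n-k : ℕ) : ℝ) * (C 2 * X) * s + ((X:ℝ[X])^2 - 1) * derivative s, ?_⟩
    have hd : derivative ((X:ℝ[X])^2 - 1) = C 2 * X := by
      simp [derivative_sub, derivative_pow]
    rw [derivative_mul, derivative_pow, hd, hnk]
    simp only [Nat.add_sub_cancel, Nat.cast_add, Nat.cast_one, C_add, C_1]
    ring

/-- derivatives of `(X²-1)^n * h` of order `< n` vanish at `±1`. -/
lemma iter_deriv_vanish (n : ℕ) (h : Polynomial ℝ) (k : ℕ) (hk : k < n) (x : ℝ)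
    (hx : x ^ 2 = 1) :
    (derivative^[k] (((X:ℝ[X])^2 - 1)^n * h)).eval x = 0 := by
  obtain ⟨s, hs⟩ := iter_deriv_factor n h k hk.le
  rw [hs]
  have : n - k ≠ 0 := by omega
  simp [hx, zero_pow this]

lemma iteratedDeriv_legendreP (ℓ m : ℕ) :
    iteratedDeriv m (legendreP ℓ)
      = fun x => (C (1 / (2 ^ ℓ * (Nat.factorial ℓ : ℝ))) * derivative^[m + ℓ] (R ℓ)).eval x := by
  have h1 : legendreP ℓ = fun x =>
      (C (1 / (2 ^ ℓ * (Nat.factorial ℓ : ℝ))) * derivative^[ℓ] (R ℓ)).eval x := by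
    funext x
    have : (fun t : ℝ => (t ^ 2 - 1) ^ ℓ) = fun t => (R ℓ).eval t := by
      funext t; simp [R]
    rw [legendreP, this, iteratedDeriv_polyEval]
    simp
  rw [h1, iteratedDeriv_polyEval]
  funext x
  rw [iterate_derivative_C_mul, Function.iterate_add_apply]

lemma iter_deriv_vanish' (n : ℕ) (h : Polynomial ℝ) (k : ℕ) (hk : k < n) (x : ℝ)
    (hx : x ^ 2 = 1) :
    (derivative^[k] ((1 - (X:ℝ[X])^2)^n * h)).eval x = 0 := by
  have e : (1 - (X:ℝ[X])^2)^n * h = ((X:ℝ[X])^2 - 1)^n * ((-1)^n * h) := by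
    rw [show (1 - (X:ℝ[X])^2) = -((X:ℝ[X])^2 - 1) by ring, neg_pow]
    ring
  rw [e]
  exact iter_deriv_vanish n _ k hk x hx

lemma natDegree_R_le (n : ℕ) : (R n).natDegree ≤ 2 * n := by
  refine (natDegree_pow_le).trans ?_
  have : ((X:ℝ[X])^2 - 1).natDegree ≤ 2 := by
    refine (natDegree_sub_le _ _).trans ?_
    simp
  nlinarith [this]

/-- The key computation, for `ℓ' < ℓ`. -/
lemma key (ℓ ℓ' m : ℕ) (hℓ' : m ≤ ℓ') (hlt : ℓ' < ℓ) :
    ∫ x in (-1 : ℝ)..1, assocLegendreP ℓ m x * assocLegendreP ℓ' m x = 0 := by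
  set c : ℝ := 1 / (2 ^ ℓ * (Nat.factorial ℓ : ℝ)) with hc
  set c' : ℝ := 1 / (2 ^ ℓ' * (Nat.factorial ℓ' : ℝ)) with hc'
  set G : Polynomial ℝ := (1 - (X:ℝ[X])^2)^m * derivative^[m + ℓ'] (R ℓ') with hG
  -- rewrite the integrand as a polynomial evaluation on [-1,1]
  have hcong : ∀ x ∈ Set.uIcc (-1:ℝ) 1,
      assocLegendreP ℓ m x * assocLegendreP ℓ' m x
        = (c * c') * ((derivative^[m + ℓ] (R ℓ)).eval x * G.eval x) := by
    intro x hx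
    rw [Set.uIcc_of_le (by norm_num)] at hx
    have hx1 : (0:ℝ) ≤ 1 - x ^ 2 := by nlinarith [hx.1, hx.2]
    have hpow : ((1 - x ^ 2) ^ ((m:ℝ)/2)) * ((1 - x ^ 2) ^ ((m:ℝ)/2)) = (1 - x ^ 2) ^ m := by
      rcases Nat.eq_zero_or_pos m with hm | hm
      · simp [hm]
      · have hmr : (0:ℝ) < m := by exact_mod_cast hm
        rw [← Real.rpow_natCast (1 - x ^ 2) m,
          ← Real.rpow_add' hx1 (by linarith : (m:ℝ)/2 + (m:ℝ)/2 ≠ 0)]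
        norm_num
    simp only [assocLegendreP, iteratedDeriv_legendreP]
    simp only [hG, eval_mul, eval_C, eval_pow, eval_sub, eval_one, eval_X, ← hc, ← hc']
    rw [← hpow]
    ring
  rw [intervalIntegral.integral_congr hcong, intervalIntegral.integral_const_mul]
  -- boundary conditions for repeated integration by parts
  have hb : ∀ j < m + ℓ,
      (derivative^[m + ℓ - 1 - j] (R ℓ)).eval 1 * (derivative^[j] G).eval 1 = 0 ∧
      (derivative^[m + ℓ - 1 - j] (R ℓ)).eval (-1) * (derivative^[j] G).eval (-1) = 0 := by
    intro j hj
    rcases lt_or_ge j m with hjm | hjm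
    · have h1 := iter_deriv_vanish' m (derivative^[m + ℓ'] (R ℓ')) j hjm 1 (by norm_num)
      have h2 := iter_deriv_vanish' m (derivative^[m + ℓ'] (R ℓ')) j hjm (-1) (by norm_num)
      rw [← hG] at h1 h2
      exact ⟨by rw [h1]; ring, by rw [h2]; ring⟩
    · have hk : m + ℓ - 1 - j < ℓ := by omega
      have h1 := iter_deriv_vanish ℓ 1 (m + ℓ - 1 - j) hk 1 (by norm_num)
      have h2 := iter_deriv_vanish ℓ 1 (m + ℓ - 1 - j) hk (-1) (by norm_num)
      rw [mul_one, show ((X:ℝ[X])^2 - 1)^ℓ = R ℓ from rfl] at h1 h2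
      exact ⟨by rw [h1]; ring, by rw [h2]; ring⟩
  rw [poly_ibp_iter (m + ℓ) (R ℓ) G hb]
  -- the `(m+ℓ)`-th derivative of `G` vanishes since `deg G ≤ m + ℓ' < m + ℓ`
  have hdeg : G.natDegree < m + ℓ := by
    have h1 : G.natDegree ≤ ((1 - (X:ℝ[X])^2)^m).natDegree + (derivative^[m + ℓ'] (R ℓ')).natDegree :=
      natDegree_mul_le
    have h2 : (derivative^[m + ℓ'] (R ℓ')).natDegree ≤ (R ℓ').natDegree - (m + ℓ') :=
      natDegree_iterate_derivative _ _
    have h3 : ((1 - (X:ℝ[X])^2)^m).natDegree ≤ 2 * m := by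
      refine (natDegree_pow_le).trans ?_
      have : ((1:ℝ[X]) - X^2).natDegree ≤ 2 := (natDegree_sub_le _ _).trans (by simp)
      nlinarith [this]
    have h4 := natDegree_R_le ℓ'
    omega
  rw [iterate_derivative_eq_zero hdeg]
  simp

end AssocLegendreAux

/-- Orthogonality of associated Legendre functions of the same order: for `ℓ ≠ ℓ'`
with `m ≤ ℓ` and `m ≤ ℓ'`, `∫_{-1}^{1} P_ℓ^m(x) P_{ℓ'}^m(x) dx = 0`. -/
theorem assocLegendre_orthogonality (ℓ ℓ' m : ℕ)
    (hℓ : m ≤ ℓ) (hℓ' : m ≤ ℓ') (hne : ℓ ≠ ℓ') :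
    ∫ x in (-1 : ℝ)..1, assocLegendreP ℓ m x * assocLegendreP ℓ' m x = 0 := by
  rcases hne.lt_or_gt with h | h
  · rw [intervalIntegral.integral_congr
      (g := fun x => assocLegendreP ℓ' m x * assocLegendreP ℓ m x)
      (fun x _ => mul_comm _ _)]
    exact AssocLegendreAux.key ℓ' ℓ m hℓ h
  · exact AssocLegendreAux.key ℓ ℓ' m hℓ' h
end
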